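/- arXiv:2208.13046 — 2 statements merged into one kernel-verified Lean document; each statement's English description precedes it below -/
import Mathlib

section
/- Let e1, e2, e3 be integers with e1 ≠ 0. In the DGA A = ⋀(y, a1, a2, a3, x1, x2, x3) with |y|=1, |a_i|=2, |x_i|=3, d y = e1·a1 + e2·a2 + e3·a3, d a_i = 0, d x_i = a_i², the element x̃1 := x1 − e1⁻²( y·dy − 2 e2 y·a2 − 2 e3 y·a3 + e2² x2 + e3² x3 ) satisfies d x̃1 = 2 e1⁻² e2 e3 · a2 ∧ a3. -/
/-- in the free graded-commutative DGA `⋀(y, a1, a2, a3, x1, x2, x3)`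
with `|y|=1`, `|aᵢ|=2`, `|xᵢ|=3`, `dy = e1 a1 + e2 a2 + e3 a3`, `daᵢ = 0`,
`dxᵢ = aᵢ²`, and `e1 ≠ 0`, the element
`x̃1 = x1 − e1⁻²(y·dy − 2e2 y·a2 − 2e3 y·a3 + e2² x2 + e3² x3)`
satisfies `d x̃1 = 2 e1⁻² e2 e3 · a2∧a3`. -/
theorem stmt_1
    (e1 e2 e3 : ℤ) (he1 : e1 ≠ 0)
    (A : Type) [Ring A] [Algebra ℝ A]
    (𝒜 : ℕ → Submodule ℝ A) [GradedAlgebra 𝒜]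
    (d : A →ₗ[ℝ] A)
    (hdd : ∀ v : A, d (d v) = 0)
    (hdeg : ∀ n : ℕ, ∀ v ∈ 𝒜 n, d v ∈ 𝒜 (n + 1))
    (hleibniz : ∀ m n : ℕ, ∀ v w : A, v ∈ 𝒜 m → w ∈ 𝒜 n →
      d (v * w) = d v * w + ((-1 : ℝ)) ^ m • (v * d w))
    (hkoszul : ∀ m n : ℕ, ∀ v w : A, v ∈ 𝒜 m → w ∈ 𝒜 n →
      v * w = ((-1 : ℝ)) ^ (m * n) • (w * v))
    (y a1 a2 a3 x1 x2 x3 : A)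
    (hy : y ∈ 𝒜 1) (ha1 : a1 ∈ 𝒜 2) (ha2 : a2 ∈ 𝒜 2) (ha3 : a3 ∈ 𝒜 2)
    (hx1 : x1 ∈ 𝒜 3) (hx2 : x2 ∈ 𝒜 3) (hx3 : x3 ∈ 𝒜 3)
    (hdy : d y = (e1 : ℝ) • a1 + (e2 : ℝ) • a2 + (e3 : ℝ) • a3)
    (hda1 : d a1 = 0) (hda2 : d a2 = 0) (hda3 : d a3 = 0)
    (hdx1 : d x1 = a1 * a1) (hdx2 : d x2 = a2 * a2) (hdx3 : d x3 = a3 * a3)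
    -- freeness: the monomials in the generators form a basis of `A`
    (B : Module.Basis (Bool × (ℕ × ℕ × ℕ) × (Bool × Bool × Bool)) ℝ A)
    (hB : ∀ (εy : Bool) (i j k : ℕ) (ε1 ε2 ε3 : Bool),
      B (εy, (i, j, k), (ε1, ε2, ε3)) =
        (if εy then y else 1) * (a1 ^ i * a2 ^ j * a3 ^ k) *
          ((if ε1 then x1 else 1) * (if ε2 then x2 else 1) * (if ε3 then x3 else 1))) :
    d (x1 - (((e1 : ℝ) ^ 2)⁻¹) •
        (y * d y - (2 * (e2 : ℝ)) • (y * a2) - (2 * (e3 : ℝ)) • (y * a3)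
          + (e2 : ℝ) ^ 2 • x2 + (e3 : ℝ) ^ 2 • x3)) =
      (2 * ((e1 : ℝ) ^ 2)⁻¹ * (e2 : ℝ) * (e3 : ℝ)) • (a2 * a3) := by
  have h2 : d y ∈ 𝒜 2 := hdeg 1 y hy
  have hdydy : d (y * d y) = d y * d y := by
    rw [hleibniz 1 2 y (d y) hy h2, hdd]; simp
  have hya2 : d (y * a2) = d y * a2 := by
    rw [hleibniz 1 2 y a2 hy ha2, hda2]; simp
  have hya3 : d (y * a3) = d y * a3 := by
    rw [hleibniz 1 2 y a3 hy ha3, hda3]; simp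
  have hc21 : a2 * a1 = a1 * a2 := by simpa [show ((-1:ℝ))^(2*2)=1 by norm_num] using hkoszul 2 2 a2 a1 ha2 ha1
  have hc31 : a3 * a1 = a1 * a3 := by simpa [show ((-1:ℝ))^(2*2)=1 by norm_num] using hkoszul 2 2 a3 a1 ha3 ha1
  have hc32 : a3 * a2 = a2 * a3 := by simpa [show ((-1:ℝ))^(2*2)=1 by norm_num] using hkoszul 2 2 a3 a2 ha3 ha2
  have he1R : (e1 : ℝ) ≠ 0 := Int.cast_ne_zero.mpr he1
  rw [map_sub, map_smul, map_add, map_add, map_sub, map_sub, map_smul, map_smul,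
    map_smul, map_smul, hdydy, hya2, hya3, hdx1, hdx2, hdx3, hdy]
  simp only [add_mul, mul_add, smul_mul_assoc, mul_smul_comm, smul_smul, hc21, hc31, hc32,
    smul_add, smul_sub]
  match_scalars <;> field_simp <;> ring
end

section
/- Let (P, g) be an oriented Riemannian 7-manifold with a 3-form φ satisfying dφ = τ0 ⋆φ for a nonzero constant τ0, where ⋆ is the Hodge star of g. On the product P × S¹ with the product metric, let θ denote the pullback of the volume 1-form of S¹ and define the 4-form Ω = φ∧θ + ⋆φ (forms on P pulled back to the product). Then dΩ = Ω ∧ (τ0·θ); in particular Ω satisfies the locally conformal parallel equation dΩ = Ω∧Θ with closed nonvanishing Lee form Θ = τ0·θ. -/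
/-- abstracting the de Rham algebra of `P × S¹` as a
graded-commutative DGA: if `φ` is a degree-3 element (the nearly parallel
`G₂`-form on `P`), `ψ` a degree-4 element (the Hodge dual `⋆φ`), `θ` a
closed degree-1 element (the volume form of `S¹`), with `dφ = τ0·ψ` and
`τ0 ≠ 0`, then the 4-form `Ω = φ∧θ + ψ` satisfies `dΩ = Ω ∧ (τ0·θ)`;
in particular it satisfies the locally conformal parallel equation
`dΩ = Ω∧Θ` with closed nonvanishing Lee form `Θ = τ0·θ`. -/
theorem stmt_12
    (τ0 : ℝ) (hτ0 : τ0 ≠ 0)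
    (A : Type) [Ring A] [Algebra ℝ A]
    (𝒜 : ℕ → Submodule ℝ A) [GradedAlgebra 𝒜]
    (d : A →ₗ[ℝ] A)
    (hdd : ∀ v : A, d (d v) = 0)
    (hdeg : ∀ n : ℕ, ∀ v ∈ 𝒜 n, d v ∈ 𝒜 (n + 1))
    (hleibniz : ∀ m n : ℕ, ∀ v w : A, v ∈ 𝒜 m → w ∈ 𝒜 n →
      d (v * w) = d v * w + ((-1 : ℝ)) ^ m • (v * d w))
    (hkoszul : ∀ m n : ℕ, ∀ v w : A, v ∈ 𝒜 m → w ∈ 𝒜 n →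
      v * w = ((-1 : ℝ)) ^ (m * n) • (w * v))
    (φ ψ θ : A)
    (hφ : φ ∈ 𝒜 3) (hψ : ψ ∈ 𝒜 4) (hθ : θ ∈ 𝒜 1)
    -- the nearly parallel equation `dφ = τ0 ⋆φ` and closedness of `θ`
    (hdφ : d φ = τ0 • ψ) (hdθ : d θ = 0)
    -- `θ` is nonvanishing
    (hθ0 : θ ≠ 0) :
    d (φ * θ + ψ) = (φ * θ + ψ) * (τ0 • θ) ∧
    d (τ0 • θ) = 0 ∧ τ0 • θ ≠ 0 := by
  have hdψ : d ψ = 0 := by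
    have h := hdd φ
    rw [hdφ, map_smul] at h
    have h2 : τ0 • d ψ = τ0 • (0 : A) := by simpa using h
    exact smul_right_injective A hτ0 h2
  have hθθ : θ * θ = 0 := by
    have h := hkoszul 1 1 θ θ hθ hθ
    have h2 : θ * θ + θ * θ = 0 := by
      have : θ * θ = -(θ * θ) := by simpa using h
      exact add_eq_zero_iff_eq_neg.mpr this
    have h3 : (2 : ℝ) • (θ * θ) = 0 := by
      rw [two_smul]; exact h2
    have := congrArg (fun x => (2 : ℝ)⁻¹ • x) h3
    simpa [smul_smul] using this
  refine ⟨?_, ?_, ?_⟩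
  · have hL := hleibniz 3 1 φ θ hφ hθ
    rw [map_add, hL, hdφ, hdθ, hdψ, mul_zero, smul_zero, add_zero, add_zero]
    rw [mul_smul_comm, add_mul, mul_assoc, hθθ, mul_zero, zero_add, smul_mul_assoc]
  · rw [map_smul, hdθ, smul_zero]
  · intro h
    apply hθ0
    have := congrArg (fun x => τ0⁻¹ • x) h
    simpa [smul_smul, inv_mul_cancel₀ hτ0] using this
end
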